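/- For every simple symmetric fractional hedonic game represented by a finite simple graph with girth at least five, the core is non-empty; moreover, there exists a partition in the core each of whose blocks is either a singleton or a star (a block S with |S| ≥ 2 containing a vertex c adjacent to every other vertex of S). -/

import Mathlib

open Finset
open scoped Classical

variable {V : Type*} [Fintype V] [DecidableEq V]

/-- The utility of player `i` in coalition `S` in the simple symmetric fractional
hedonic game given by the graph `G`: the number of neighbors of `i` in `S`
divided by the size of `S`. -/
noncomputable def util (G : SimpleGraph V) (i : V) (S : Finset V) : ℚ :=
  ((S.filter fun j => G.Adj i j).card : ℚ) / (S.card : ℚ)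

/-- A partition of the player set `V`, given by the block `part i` of each player `i`. -/
structure FHGPartition (V : Type*) [Fintype V] [DecidableEq V] where
  part : V → Finset V
  mem_part : ∀ i, i ∈ part i
  part_eq : ∀ i j, j ∈ part i → part j = part i

/-- A nonempty coalition `S` blocks `π` if every member is strictly better off in `S`. -/
def Blocks (G : SimpleGraph V) (π : FHGPartition V) (S : Finset V) : Prop :=
  S.Nonempty ∧ ∀ i ∈ S, util G i (π.part i) < util G i S

/-- A partition is in the core if no nonempty coalition blocks it. -/
def InCore (G : SimpleGraph V) (π : FHGPartition V) : Prop :=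
  ∀ S : Finset V, ¬ Blocks G π S

/-- A nonempty coalition `S` weakly blocks `π` if every member is weakly better off
in `S` and some member is strictly better off. -/
def WeaklyBlocks (G : SimpleGraph V) (π : FHGPartition V) (S : Finset V) : Prop :=
  S.Nonempty ∧ (∀ i ∈ S, util G i (π.part i) ≤ util G i S) ∧
    ∃ j ∈ S, util G j (π.part j) < util G j S

/-- A partition is in the strict core if no nonempty coalition weakly blocks it. -/
def InStrictCore (G : SimpleGraph V) (π : FHGPartition V) : Prop :=
  ∀ S : Finset V, ¬ WeaklyBlocks G π S


set_option linter.unusedSectionVars false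
set_option linter.unusedVariables false
set_option maxHeartbeats 1000000


def TriFree (G : SimpleGraph V) : Prop :=
  ∀ ⦃a b c : V⦄, G.Adj a b → G.Adj b c → G.Adj a c → False

def C4Free (G : SimpleGraph V) : Prop :=
  ∀ ⦃a b c d : V⦄, G.Adj a b → G.Adj b c → G.Adj c d → G.Adj d a → a ≠ c → b ≠ d → False

lemma triFree_of_girth {G : SimpleGraph V}
    (hg : ∀ (v : V) (c : G.Walk v v), c.IsCycle → c.length ≠ 3 ∧ c.length ≠ 4) :
    TriFree G := by
  intro a b c hab hbc hac
  have h1 : a ≠ b := hab.ne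
  have h2 : b ≠ c := hbc.ne
  have h3 : a ≠ c := hac.ne
  let w : G.Walk a a :=
    SimpleGraph.Walk.cons hab (SimpleGraph.Walk.cons hbc (SimpleGraph.Walk.cons hac.symm SimpleGraph.Walk.nil))
  have hcyc : w.IsCycle := by
    rw [SimpleGraph.Walk.isCycle_def]
    refine ⟨?_, by simp [w], ?_⟩
    · rw [SimpleGraph.Walk.isTrail_def]
      simp only [w, SimpleGraph.Walk.edges_cons, SimpleGraph.Walk.edges_nil,
        List.nodup_cons, List.mem_cons, List.not_mem_nil, or_false, List.mem_singleton,
        List.nodup_nil, and_true, Sym2.eq, Sym2.rel_iff', Prod.mk.injEq, Prod.swap_prod_mk]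
      tauto
    · simp only [w, SimpleGraph.Walk.support_cons, SimpleGraph.Walk.support_nil, List.tail_cons]
      simp only [List.nodup_cons, List.mem_cons, List.not_mem_nil, or_false,
        List.mem_singleton, List.nodup_nil, and_true]
      tauto
  exact (hg a w hcyc).1 (by simp [w])

lemma c4Free_of_girth {G : SimpleGraph V}
    (hg : ∀ (v : V) (c : G.Walk v v), c.IsCycle → c.length ≠ 3 ∧ c.length ≠ 4) :
    C4Free G := by
  intro a b c d hab hbc hcd hda hac hbd
  have h1 : a ≠ b := hab.ne
  have h2 : b ≠ c := hbc.ne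
  have h3 : c ≠ d := hcd.ne
  have h4 : d ≠ a := hda.ne
  let w : G.Walk a a :=
    SimpleGraph.Walk.cons hab (SimpleGraph.Walk.cons hbc (SimpleGraph.Walk.cons hcd
      (SimpleGraph.Walk.cons hda SimpleGraph.Walk.nil)))
  have hcyc : w.IsCycle := by
    rw [SimpleGraph.Walk.isCycle_def]
    refine ⟨?_, by simp [w], ?_⟩
    · rw [SimpleGraph.Walk.isTrail_def]
      simp only [w, SimpleGraph.Walk.edges_cons, SimpleGraph.Walk.edges_nil,
        List.nodup_cons, List.mem_cons, List.not_mem_nil, or_false, List.mem_singleton,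
        List.nodup_nil, and_true, Sym2.eq, Sym2.rel_iff', Prod.mk.injEq, Prod.swap_prod_mk]
      tauto
    · simp only [w, SimpleGraph.Walk.support_cons, SimpleGraph.Walk.support_nil, List.tail_cons]
      simp only [List.nodup_cons, List.mem_cons, List.not_mem_nil, or_false,
        List.mem_singleton, List.nodup_nil, and_true]
      tauto
  exact (hg a w hcyc).2 (by simp [w])

-- basic util lemmas
lemma util_nonneg (G : SimpleGraph V) (i : V) (S : Finset V) : 0 ≤ util G i S := by
  unfold util; positivity

lemma util_singleton (G : SimpleGraph V) (i : V) : util G i {i} = 0 := by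
  unfold util
  rw [Finset.filter_singleton]
  simp

lemma util_center {G : SimpleGraph V} {B : Finset V} {c : V} (hcB : c ∈ B)
    (hc : ∀ j ∈ B, j ≠ c → G.Adj c j) :
    util G c B = ((B.card : ℚ) - 1) / (B.card : ℚ) := by
  have hfil : B.filter (fun j => G.Adj c j) = B.erase c := by
    ext j
    simp only [mem_filter, mem_erase]
    constructor
    · rintro ⟨hj, ha⟩; exact ⟨ha.ne', hj⟩
    · rintro ⟨hne, hj⟩; exact ⟨hj, hc j hj hne⟩
  have h1 : 1 ≤ B.card := card_pos.mpr ⟨c, hcB⟩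
  rw [util, hfil, card_erase_of_mem hcB, Nat.cast_sub h1, Nat.cast_one]

lemma util_leaf {G : SimpleGraph V} (hTF : TriFree G) {B : Finset V} {c i : V} (hcB : c ∈ B)
    (hc : ∀ j ∈ B, j ≠ c → G.Adj c j) (hiB : i ∈ B) (hic : i ≠ c) :
    util G i B = 1 / (B.card : ℚ) := by
  have hfil : B.filter (fun j => G.Adj i j) = {c} := by
    ext j
    simp only [mem_filter, mem_singleton]
    constructor
    · rintro ⟨hj, ha⟩
      by_contra hjc
      exact hTF (hc i hiB hic) ha (hc j hj hjc)
    · rintro rfl; exact ⟨hcB, (hc i hiB hic).symm⟩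
  rw [util, hfil, card_singleton, Nat.cast_one]

lemma starBlockSum {G : SimpleGraph V} (hTF : TriFree G) {B : Finset V} {c : V} (hcB : c ∈ B)
    (hc : ∀ j ∈ B, j ≠ c → G.Adj c j) :
    ∑ i ∈ B, util G i B = 2 * ((B.card : ℚ) - 1) / (B.card : ℚ) := by
  by_cases h2 : 2 ≤ B.card
  · rw [← Finset.add_sum_erase B _ hcB]
    have h1 : ∀ i ∈ B.erase c, util G i B = 1 / (B.card : ℚ) := fun i hi =>
      util_leaf hTF hcB hc (mem_of_mem_erase hi) (ne_of_mem_erase hi)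
    rw [Finset.sum_congr rfl h1, Finset.sum_const, card_erase_of_mem hcB,
      util_center hcB hc, nsmul_eq_mul]
    have hle : 1 ≤ B.card := card_pos.mpr ⟨c, hcB⟩
    have hpos : (0:ℚ) < (B.card : ℚ) := by exact_mod_cast card_pos.mpr ⟨c, hcB⟩
    rw [Nat.cast_sub hle, Nat.cast_one]
    field_simp
    ring
  · have h1 : B.card = 1 := by
      have := card_pos.mpr ⟨c, hcB⟩; omega
    obtain ⟨a, ha⟩ := Finset.card_eq_one.mp h1
    have hac : c = a := by rw [ha] at hcB; simpa using hcB
    subst hac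
    rw [ha, Finset.sum_singleton, util_singleton]
    simp

def IsStarB (G : SimpleGraph V) (B : Finset V) : Prop :=
  B.card = 1 ∨ (2 ≤ B.card ∧ ∃ c ∈ B, ∀ j ∈ B, j ≠ c → G.Adj c j)

def IsStarP (G : SimpleGraph V) (P : FHGPartition V) : Prop :=
  ∀ i : V, (P.part i).card = 1 ∨
    (2 ≤ (P.part i).card ∧ ∃ c ∈ P.part i, ∀ j ∈ P.part i, j ≠ c → G.Adj c j)

def IsCtr (G : SimpleGraph V) (P : FHGPartition V) (x : V) : Prop :=
  ∀ j ∈ P.part x, j ≠ x → G.Adj x j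

noncomputable def SW (G : SimpleGraph V) (P : FHGPartition V) : ℚ :=
  ∑ i, util G i (P.part i)

lemma part_card_pos (P : FHGPartition V) (i : V) : 0 < (P.part i).card :=
  card_pos.mpr ⟨i, P.mem_part i⟩

lemma part_eq_singleton {P : FHGPartition V} {i : V} (h : (P.part i).card = 1) :
    P.part i = {i} := by
  obtain ⟨a, ha⟩ := Finset.card_eq_one.mp h
  have := P.mem_part i
  rw [ha] at this ⊢
  rw [mem_singleton] at this
  rw [this]

lemma part_disjoint {P : FHGPartition V} {i j : V} (h : i ∉ P.part j) :
    Disjoint (P.part i) (P.part j) := by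
  rw [Finset.disjoint_left]
  intro a hai haj
  have h1 := P.part_eq i a hai
  have h2 := P.part_eq j a haj
  rw [h1] at h2
  exact h (h2 ▸ P.mem_part i)

lemma blockSum {G : SimpleGraph V} (hTF : TriFree G) {P : FHGPartition V} (hP : IsStarP G P)
    (v : V) :
    ∑ i ∈ P.part v, util G i (P.part v)
      = 2 * (((P.part v).card : ℚ) - 1) / ((P.part v).card : ℚ) := by
  rcases hP v with h1 | ⟨_, c, hcB, hc⟩
  · rw [part_eq_singleton h1, Finset.sum_singleton, util_singleton]
    simp
  · exact starBlockSum hTF hcB hc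

def reblock (P : FHGPartition V) (B : Finset V) : FHGPartition V where
  part i := if i ∈ B then B else P.part i \ B
  mem_part i := by
    by_cases h : i ∈ B
    · simp [h]
    · simp [h, P.mem_part i]
  part_eq i j hj := by
    by_cases hi : i ∈ B
    · simp only [if_pos hi] at hj
      simp [hj, hi]
    · simp only [if_neg hi, mem_sdiff] at hj
      simp only [if_neg hj.2, if_neg hi]
      rw [P.part_eq i j hj.1]

lemma reblock_part_mem {P : FHGPartition V} {B : Finset V} {i : V} (h : i ∈ B) :
    (reblock P B).part i = B := if_pos h

lemma reblock_part_not_mem {P : FHGPartition V} {B : Finset V} {i : V} (h : i ∉ B) :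
    (reblock P B).part i = P.part i \ B := if_neg h

lemma SW_diff (G : SimpleGraph V) (P : FHGPartition V) (B T : Finset V) (hBT : B ⊆ T)
    (hT : ∀ i, i ∉ T → Disjoint (P.part i) B) :
    SW G (reblock P B) - SW G P
      = ∑ i ∈ T, (util G i ((reblock P B).part i) - util G i (P.part i)) := by
  rw [SW, SW, ← Finset.sum_sub_distrib]
  symm
  apply Finset.sum_subset (subset_univ T)
  intro i _ hiT
  have hiB : i ∉ B := fun h => hiT (hBT h)
  rw [reblock_part_not_mem hiB,
    Finset.sdiff_eq_self_of_disjoint (hT i hiT), sub_self]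

lemma donor_diff_sing {G : SimpleGraph V} {P : FHGPartition V} {x : V}
    (h1 : P.part x = {x}) {B : Finset V} (hxB : x ∈ B) :
    ∑ i ∈ P.part x, (util G i ((reblock P B).part i) - util G i (P.part i))
      = util G x B := by
  rw [h1, Finset.sum_singleton, reblock_part_mem hxB, h1, util_singleton, sub_zero]

lemma donor_diff_leaf {G : SimpleGraph V} (hTF : TriFree G) {P : FHGPartition V} (hP : IsStarP G P)
    {x : V} (h3 : 3 ≤ (P.part x).card) (hnc : ¬ IsCtr G P x) {B : Finset V} (hxB : x ∈ B)
    (hcap : ∀ j ∈ P.part x, j ∈ B → j = x) :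
    ∑ i ∈ P.part x, (util G i ((reblock P B).part i) - util G i (P.part i))
      = util G x B - 2 / (((P.part x).card : ℚ) * (((P.part x).card : ℚ) - 1)) := by
  set D := P.part x with hD
  obtain ⟨c, hcB, hc⟩ : ∃ c ∈ D, ∀ j ∈ D, j ≠ c → G.Adj c j := by
    rcases hP x with h1 | ⟨_, c, hc1, hc2⟩
    · rw [← hD] at h1; omega
    · exact ⟨c, hc1, hc2⟩
  have hcx : c ≠ x := by
    rintro rfl
    exact hnc hc
  have hxD : x ∈ D := P.mem_part x
  have hDB : D \ B = D.erase x := by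
    ext j
    simp only [mem_sdiff, mem_erase]
    constructor
    · rintro ⟨hj, hjB⟩
      exact ⟨fun h => hjB (h ▸ hxB), hj⟩
    · rintro ⟨hne, hj⟩
      exact ⟨hj, fun hjB => hne (hcap j hj hjB)⟩
  have hpartmem : ∀ i ∈ D.erase x, (reblock P B).part i = D.erase x := by
    intro i hi
    have hiD : i ∈ D := mem_of_mem_erase hi
    have hiB : i ∉ B := fun h => (ne_of_mem_erase hi) (hcap i hiD h)
    rw [reblock_part_not_mem hiB, P.part_eq x i hiD, ← hD, hDB]
  have hpartD : ∀ i ∈ D.erase x, P.part i = D := fun i hi => by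
    rw [P.part_eq x i (mem_of_mem_erase hi)]
  rw [← Finset.add_sum_erase D _ hxD, reblock_part_mem hxB]
  have hsum1 : ∑ i ∈ D.erase x, (util G i ((reblock P B).part i) - util G i (P.part i))
      = ∑ i ∈ D.erase x, (util G i (D.erase x) - util G i D) := by
    apply Finset.sum_congr rfl
    intro i hi
    rw [hpartmem i hi, hpartD i hi]
  rw [hsum1, Finset.sum_sub_distrib]
  have hcE : c ∈ D.erase x := mem_erase.mpr ⟨hcx, hcB⟩
  have hcE2 : ∀ j ∈ D.erase x, j ≠ c → G.Adj c j := fun j hj hne =>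
    hc j (mem_of_mem_erase hj) hne
  have hux : util G x D = 1 / (D.card : ℚ) := util_leaf hTF hcB hc hxD hcx.symm
  have hS1 : ∑ i ∈ D.erase x, util G i (D.erase x)
      = 2 * (((D.erase x).card : ℚ) - 1) / ((D.erase x).card : ℚ) :=
    starBlockSum hTF hcE hcE2
  have hS2 : ∑ i ∈ D.erase x, util G i D
      = 2 * ((D.card : ℚ) - 1) / (D.card : ℚ) - 1 / (D.card : ℚ) := by
    have htot := starBlockSum hTF hcB hc
    rw [← Finset.add_sum_erase D (fun i => util G i D) hxD] at htot
    linarith [hux, htot]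
  rw [hS1, hS2, hux, card_erase_of_mem hxD]
  have hcard3 : (3:ℚ) ≤ (D.card : ℚ) := by exact_mod_cast h3
  have h1le : 1 ≤ D.card := by omega
  rw [Nat.cast_sub h1le, Nat.cast_one]
  have hne0 : (D.card : ℚ) ≠ 0 := by linarith
  have hne1 : (D.card : ℚ) - 1 ≠ 0 := by linarith
  field_simp
  ring

section LemA

variable {G : SimpleGraph V} {P : FHGPartition V}

lemma lemA_core (hTF : TriFree G) (hP : IsStarP G P)
    (hopt : ∀ Q : FHGPartition V, IsStarP G Q → SW G Q ≤ SW G P)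
    {c x : V} (hadj : G.Adj c x) (hctr : IsCtr G P c) (hxpc : x ∉ P.part c)
    (hloss : ℚ)
    (hdonor : ∑ i ∈ P.part x, (util G i ((reblock P (insert x (P.part c))).part i)
        - util G i (P.part i)) = util G x (insert x (P.part c)) - hloss)
    (hstar' : IsStarP G (reblock P (insert x (P.part c)))) :
    2 / (((P.part c).card : ℚ) * (((P.part c).card : ℚ) + 1)) ≤ hloss := by
  set B := insert x (P.part c) with hB
  have hcc : c ∈ P.part c := P.mem_part c
  have hxc : x ≠ c := fun h => hxpc (h ▸ hcc)
  have hxB : x ∈ B := mem_insert_self x _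
  have hcB : c ∈ B := mem_insert_of_mem hcc
  have hBcard : B.card = (P.part c).card + 1 := card_insert_of_notMem hxpc
  have hBctr : ∀ j ∈ B, j ≠ c → G.Adj c j := by
    intro j hj hne
    rcases mem_insert.mp hj with rfl | hj'
    · exact hadj
    · exact hctr j hj' hne
  have hdiscx : Disjoint (P.part x) (P.part c) := part_disjoint hxpc
  -- SW difference over T
  have hT : ∀ i, i ∉ P.part c ∪ P.part x → Disjoint (P.part i) B := by
    intro i hiT
    have h1 : i ∉ P.part c := fun h => hiT (mem_union_left _ h)
    have h2 : x ∉ P.part i := by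
      intro h
      have := P.part_eq i x h
      exact hiT (mem_union_right _ (this ▸ P.mem_part i))
    rw [hB, Finset.disjoint_insert_right]
    exact ⟨h2, part_disjoint h1⟩
  have hdiff := SW_diff G P B (P.part c ∪ P.part x)
    (by rw [hB]; intro j hj; rcases mem_insert.mp hj with h | h
        · rw [h]; exact mem_union_right _ (P.mem_part x)
        · exact mem_union_left _ h) hT
  rw [Finset.sum_union hdiscx.symm] at hdiff
  -- sum over part c
  have hsumc : ∑ i ∈ P.part c, (util G i ((reblock P B).part i) - util G i (P.part i))
      = ∑ i ∈ P.part c, (util G i B - util G i (P.part c)) := by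
    apply Finset.sum_congr rfl
    intro i hi
    rw [reblock_part_mem (mem_insert_of_mem hi), P.part_eq c i hi]
  rw [hsumc, Finset.sum_sub_distrib] at hdiff
  have hinsert : ∑ i ∈ B, util G i B = util G x B + ∑ i ∈ P.part c, util G i B := by
    rw [hB, Finset.sum_insert hxpc]
  have hSB : ∑ i ∈ B, util G i B = 2 * ((B.card : ℚ) - 1) / (B.card : ℚ) :=
    starBlockSum hTF hcB hBctr
  have huxB : util G x B = 1 / (B.card : ℚ) := util_leaf hTF hcB hBctr hxB hxc
  have hSc : ∑ i ∈ P.part c, util G i (P.part c)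
      = 2 * (((P.part c).card : ℚ) - 1) / ((P.part c).card : ℚ) := blockSum hTF hP c
  have hopt' : SW G (reblock P B) - SW G P ≤ 0 :=
    sub_nonpos.mpr (hopt _ hstar')
  rw [hdiff] at hopt'
  rw [hdonor] at hopt'
  have hsc1 : ∑ i ∈ P.part c, util G i B = 2 * ((B.card : ℚ) - 1) / (B.card : ℚ)
      - 1 / (B.card : ℚ) := by
    rw [← hSB, hinsert, huxB]; ring
  rw [hsc1, hSc, huxB] at hopt'
  have hBq : (B.card : ℚ) = ((P.part c).card : ℚ) + 1 := by
    rw [hBcard]; push_cast; ring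
  rw [hBq] at hopt'
  have ha1 : (1:ℚ) ≤ ((P.part c).card : ℚ) := by
    exact_mod_cast part_card_pos P c
  set a := ((P.part c).card : ℚ)
  have h0 : a ≠ 0 := by linarith
  have h1 : a + 1 ≠ 0 := by linarith
  have hpa : 0 < a := by linarith
  have hpa1 : 0 < a + 1 := by linarith
  rw [div_le_iff₀ (by positivity : (0:ℚ) < a * (a + 1))]
  field_simp at hopt'
  rw [mul_zero] at hopt'
  nlinarith [hopt', hpa, hpa1]

end LemA

section LemA2

variable {G : SimpleGraph V} {P : FHGPartition V}

lemma lemA_cap {c x : V} (hxpc : x ∉ P.part c) :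
    ∀ j ∈ P.part x, j ∈ insert x (P.part c) → j = x := by
  intro j hjx hjB
  rcases mem_insert.mp hjB with h | h
  · exact h
  · exfalso
    exact (Finset.disjoint_left.mp (part_disjoint hxpc)) hjx h

lemma lemA_star (hTF : TriFree G) (hP : IsStarP G P)
    {c x : V} (hadj : G.Adj c x) (hctr : IsCtr G P c) (hxpc : x ∉ P.part c)
    (hxrem : P.part x = {x} ∨ (3 ≤ (P.part x).card ∧ ¬ IsCtr G P x)) :
    IsStarP G (reblock P (insert x (P.part c))) := by
  set B := insert x (P.part c) with hB
  have hcc : c ∈ P.part c := P.mem_part c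
  have hxc : x ≠ c := fun h => hxpc (h ▸ hcc)
  have hxB : x ∈ B := mem_insert_self x _
  have hcB : c ∈ B := mem_insert_of_mem hcc
  have hBcard : B.card = (P.part c).card + 1 := card_insert_of_notMem hxpc
  have hBctr : ∀ j ∈ B, j ≠ c → G.Adj c j := by
    intro j hj hne
    rcases mem_insert.mp hj with h | h
    · rw [h]; exact hadj
    · exact hctr j h hne
  intro i
  by_cases hiB : i ∈ B
  · rw [reblock_part_mem hiB]
    right
    refine ⟨?_, c, hcB, hBctr⟩
    have := part_card_pos P c
    omega
  · rw [reblock_part_not_mem hiB]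
    by_cases hix : i ∈ P.part x
    · -- i is in the donor block
      rcases hxrem with hsing | ⟨h3, hnc⟩
      · exfalso
        rw [hsing, mem_singleton] at hix
        exact hiB (hix ▸ hxB)
      · have hpi : P.part i = P.part x := P.part_eq x i hix
        have hDB : P.part x \ B = (P.part x).erase x := by
          ext j
          simp only [mem_sdiff, mem_erase]
          constructor
          · rintro ⟨hj, hjB⟩
            exact ⟨fun h => hjB (h ▸ hxB), hj⟩
          · rintro ⟨hne, hj⟩
            exact ⟨hj, fun hjB => hne (lemA_cap hxpc j hj hjB)⟩
        rw [hpi, hDB]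
        obtain ⟨z, hzB, hz⟩ : ∃ z ∈ P.part x, ∀ j ∈ P.part x, j ≠ z → G.Adj z j := by
          rcases hP x with h1 | ⟨_, z, hz1, hz2⟩
          · omega
          · exact ⟨z, hz1, hz2⟩
        have hzx : z ≠ x := by
          rintro rfl
          exact hnc hz
        right
        constructor
        · rw [card_erase_of_mem (P.mem_part x)]; omega
        · exact ⟨z, mem_erase.mpr ⟨hzx, hzB⟩,
            fun j hj hne => hz j (mem_of_mem_erase hj) hne⟩
    · have hipc : i ∉ P.part c := fun h => hiB (mem_insert_of_mem h)
      have hxpi : x ∉ P.part i := by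
        intro h
        have := P.part_eq i x h
        exact hix (this ▸ P.mem_part i)
      have hd : Disjoint (P.part i) B := by
        rw [hB, Finset.disjoint_insert_right]
        exact ⟨hxpi, part_disjoint hipc⟩
      rw [Finset.sdiff_eq_self_of_disjoint hd]
      exact hP i

lemma lemA_sing (hTF : TriFree G) (hP : IsStarP G P)
    (hopt : ∀ Q : FHGPartition V, IsStarP G Q → SW G Q ≤ SW G P)
    {c x : V} (hadj : G.Adj c x) (hctr : IsCtr G P c) (hxpc : x ∉ P.part c)
    (hsing : P.part x = {x}) : False := by
  have hxB : x ∈ insert x (P.part c) := mem_insert_self x _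
  have hdonor := donor_diff_sing (G := G) hsing hxB
  have hkey := lemA_core hTF hP hopt hadj hctr hxpc 0
    (by rw [hdonor, sub_zero]) (lemA_star hTF hP hadj hctr hxpc (Or.inl hsing))
  have ha1 : (1:ℚ) ≤ ((P.part c).card : ℚ) := by exact_mod_cast part_card_pos P c
  have : (0:ℚ) < 2 / (((P.part c).card : ℚ) * (((P.part c).card : ℚ) + 1)) := by positivity
  linarith

lemma lemA_big (hTF : TriFree G) (hP : IsStarP G P)
    (hopt : ∀ Q : FHGPartition V, IsStarP G Q → SW G Q ≤ SW G P)
    {c x : V} (hadj : G.Adj c x) (hctr : IsCtr G P c) (hxpc : x ∉ P.part c)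
    (h3 : 3 ≤ (P.part x).card) (hnc : ¬ IsCtr G P x) :
    ((P.part x).card : ℚ) * (((P.part x).card : ℚ) - 1)
      ≤ ((P.part c).card : ℚ) * (((P.part c).card : ℚ) + 1) := by
  have hxB : x ∈ insert x (P.part c) := mem_insert_self x _
  have hdonor := donor_diff_leaf hTF hP h3 hnc hxB (lemA_cap hxpc)
  have hkey := lemA_core hTF hP hopt hadj hctr hxpc _
    hdonor (lemA_star hTF hP hadj hctr hxpc (Or.inr ⟨h3, hnc⟩))
  have ha1 : (1:ℚ) ≤ ((P.part c).card : ℚ) := by exact_mod_cast part_card_pos P c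
  have hb3 : (3:ℚ) ≤ ((P.part x).card : ℚ) := by exact_mod_cast h3
  set a := ((P.part c).card : ℚ)
  set b := ((P.part x).card : ℚ)
  have hA : (0:ℚ) < a * (a + 1) := by nlinarith
  have hBq : (0:ℚ) < b * (b - 1) := by nlinarith
  rw [div_le_div_iff₀ hA hBq] at hkey
  nlinarith [hkey]

end LemA2

section LemB

variable {G : SimpleGraph V} {P : FHGPartition V}

def Removable (G : SimpleGraph V) (P : FHGPartition V) (v : V) : Prop :=
  P.part v = {v} ∨ (3 ≤ (P.part v).card ∧ ¬ IsCtr G P v)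

lemma donor_star (hP : IsStarP G P) {v : V} (h3 : 3 ≤ (P.part v).card) (hnc : ¬ IsCtr G P v)
    {B : Finset V} (hvB : v ∈ B) (hcap : ∀ j ∈ P.part v, j ∈ B → j = v) :
    P.part v \ B = (P.part v).erase v ∧ 2 ≤ ((P.part v).erase v).card ∧
      ∃ z ∈ (P.part v).erase v, ∀ j ∈ (P.part v).erase v, j ≠ z → G.Adj z j := by
  have hsd : P.part v \ B = (P.part v).erase v := by
    ext j
    simp only [mem_sdiff, mem_erase]
    constructor
    · rintro ⟨hj, hjB⟩
      exact ⟨fun h => hjB (h ▸ hvB), hj⟩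
    · rintro ⟨hne, hj⟩
      exact ⟨hj, fun hjB => hne (hcap j hj hjB)⟩
  obtain ⟨z, hzB, hz⟩ : ∃ z ∈ P.part v, ∀ j ∈ P.part v, j ≠ z → G.Adj z j := by
    rcases hP v with h1 | ⟨_, z, hz1, hz2⟩
    · omega
    · exact ⟨z, hz1, hz2⟩
  have hzv : z ≠ v := by
    rintro rfl
    exact hnc hz
  refine ⟨hsd, ?_, z, mem_erase.mpr ⟨hzv, hzB⟩,
    fun j hj hne => hz j (mem_of_mem_erase hj) hne⟩
  rw [card_erase_of_mem (P.mem_part v)]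
  omega

lemma donor_bound (hTF : TriFree G) (hP : IsStarP G P) {v : V}
    (hrem : Removable G P v) {B : Finset V} (hvB : v ∈ B)
    (hcap : ∀ j ∈ P.part v, j ∈ B → j = v) :
    ∃ L : ℚ, (∑ i ∈ P.part v, (util G i ((reblock P B).part i) - util G i (P.part i))
        = util G v B - L) ∧ 0 ≤ L ∧ L ≤ 1/3 := by
  rcases hrem with hsing | ⟨h3, hnc⟩
  · exact ⟨0, by rw [donor_diff_sing hsing hvB, sub_zero], le_refl _, by norm_num⟩
  · refine ⟨2 / (((P.part v).card : ℚ) * (((P.part v).card : ℚ) - 1)),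
      donor_diff_leaf hTF hP h3 hnc hvB hcap, ?_, ?_⟩
    · have hb3 : (3:ℚ) ≤ ((P.part v).card : ℚ) := by exact_mod_cast h3
      apply div_nonneg (by norm_num)
      nlinarith
    · have hb3 : (3:ℚ) ≤ ((P.part v).card : ℚ) := by exact_mod_cast h3
      rw [div_le_div_iff₀ (by nlinarith) (by norm_num)]
      nlinarith

lemma lemB (hTF : TriFree G) (hP : IsStarP G P)
    (hopt : ∀ Q : FHGPartition V, IsStarP G Q → SW G Q ≤ SW G P)
    {x y : V} (hadj : G.Adj x y) (hyx : y ∉ P.part x)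
    (hx : Removable G P x) (hy : Removable G P y) : False := by
  have hxy : x ≠ y := hadj.ne
  set B : Finset V := {x, y} with hB
  have hxB : x ∈ B := by simp [hB]
  have hyB : y ∈ B := by simp [hB]
  have hBcard : B.card = 2 := card_pair hxy
  have hxpy : x ∉ P.part y := by
    intro h
    have heq := P.part_eq y x h
    exact hyx (by rw [heq]; exact P.mem_part y)
  have hBctr : ∀ j ∈ B, j ≠ x → G.Adj x j := by
    intro j hj hne
    rcases mem_insert.mp hj with h | h
    · exact absurd h hne
    · rw [mem_singleton] at h
      rw [h]; exact hadj
  have hcapx : ∀ j ∈ P.part x, j ∈ B → j = x := by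
    intro j hj hjB
    rcases mem_insert.mp hjB with h | h
    · exact h
    · rw [mem_singleton] at h
      exact absurd (h ▸ hj) hyx
  have hcapy : ∀ j ∈ P.part y, j ∈ B → j = y := by
    intro j hj hjB
    rcases mem_insert.mp hjB with h | h
    · exact absurd (h ▸ hj) hxpy
    · rw [mem_singleton] at h
      exact h
  have hdxy : Disjoint (P.part x) (P.part y) := part_disjoint hxpy
  -- star partition
  have hstar' : IsStarP G (reblock P B) := by
    intro i
    by_cases hiB : i ∈ B
    · rw [reblock_part_mem hiB]
      right
      exact ⟨by omega, x, hxB, hBctr⟩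
    · rw [reblock_part_not_mem hiB]
      by_cases hix : i ∈ P.part x
      · rcases hx with hsing | ⟨h3, hnc⟩
        · exfalso
          rw [hsing, mem_singleton] at hix
          exact hiB (hix ▸ hxB)
        · obtain ⟨hsd, hcard, z, hz1, hz2⟩ := donor_star hP h3 hnc hxB hcapx
          rw [P.part_eq x i hix, hsd]
          exact Or.inr ⟨hcard, z, hz1, hz2⟩
      · by_cases hiy : i ∈ P.part y
        · rcases hy with hsing | ⟨h3, hnc⟩
          · exfalso
            rw [hsing, mem_singleton] at hiy
            exact hiB (hiy ▸ hyB)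
          · obtain ⟨hsd, hcard, z, hz1, hz2⟩ := donor_star hP h3 hnc hyB hcapy
            rw [P.part_eq y i hiy, hsd]
            exact Or.inr ⟨hcard, z, hz1, hz2⟩
        · have hxpi : x ∉ P.part i := by
            intro h
            exact hix ((P.part_eq i x h) ▸ P.mem_part i)
          have hypi : y ∉ P.part i := by
            intro h
            exact hiy ((P.part_eq i y h) ▸ P.mem_part i)
          have hd : Disjoint (P.part i) B := by
            rw [hB, Finset.disjoint_insert_right, Finset.disjoint_singleton_right]
            exact ⟨hxpi, hypi⟩
          rw [Finset.sdiff_eq_self_of_disjoint hd]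
          exact hP i
  -- SW difference
  have hT : ∀ i, i ∉ P.part x ∪ P.part y → Disjoint (P.part i) B := by
    intro i hiT
    have h1 : x ∉ P.part i := by
      intro h
      exact hiT (mem_union_left _ ((P.part_eq i x h) ▸ P.mem_part i))
    have h2 : y ∉ P.part i := by
      intro h
      exact hiT (mem_union_right _ ((P.part_eq i y h) ▸ P.mem_part i))
    rw [hB, Finset.disjoint_insert_right, Finset.disjoint_singleton_right]
    exact ⟨h1, h2⟩
  have hdiff := SW_diff G P B (P.part x ∪ P.part y)
    (by intro j hj; rcases mem_insert.mp hj with h | h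
        · rw [h]; exact mem_union_left _ (P.mem_part x)
        · rw [mem_singleton] at h; rw [h]; exact mem_union_right _ (P.mem_part y)) hT
  rw [Finset.sum_union hdxy] at hdiff
  obtain ⟨Lx, hLx, hLx0, hLx3⟩ := donor_bound hTF hP hx hxB hcapx
  obtain ⟨Ly, hLy, hLy0, hLy3⟩ := donor_bound hTF hP hy hyB hcapy
  rw [hLx, hLy] at hdiff
  have huxB : util G x B = 1 / 2 := by
    rw [util_center hxB hBctr, hBcard]; norm_num
  have huyB : util G y B = 1 / 2 := by
    rw [util_leaf hTF hxB hBctr hyB hxy.symm, hBcard]; norm_num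
  rw [huxB, huyB] at hdiff
  have hopt' : SW G (reblock P B) - SW G P ≤ 0 := sub_nonpos.mpr (hopt _ hstar')
  rw [hdiff] at hopt'
  linarith

end LemB

section Main

variable {G : SimpleGraph V} {P : FHGPartition V}

lemma isCtr_of_card_two (hP : IsStarP G P) {v : V} (h2 : (P.part v).card = 2) :
    IsCtr G P v := by
  rcases hP v with h1 | ⟨_, c, hcB, hc⟩
  · omega
  · intro j hj hjv
    by_cases hcv : c = v
    · subst hcv
      exact hc j hj hjv
    · have hcj : c = j := by
        by_contra hcj
        have : 2 < (P.part v).card := by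
          rw [Finset.two_lt_card_iff]
          exact ⟨v, j, c, P.mem_part v, hj, hcB, Ne.symm hjv, fun h => hcv h.symm, fun h => hcj h.symm⟩
        omega
      subst hcj
      exact (hc v (P.mem_part v) (fun h => hcv h.symm)).symm

lemma role_cases (hP : IsStarP G P) (v : V) :
    Removable G P v ∨ (2 ≤ (P.part v).card ∧ IsCtr G P v) := by
  rcases hP v with h1 | ⟨h2, c, hcB, hc⟩
  · exact Or.inl (Or.inl (part_eq_singleton h1))
  · by_cases hctr : IsCtr G P v
    · exact Or.inr ⟨h2, hctr⟩
    · left; right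
      refine ⟨?_, hctr⟩
      by_cases hc2 : (P.part v).card = 2
      · exact absurd (isCtr_of_card_two hP hc2) hctr
      · omega

lemma util_part_spec {v : V} (hctr : IsCtr G P v) :
    util G v (P.part v) = (((P.part v).card : ℚ) - 1) / ((P.part v).card : ℚ) :=
  util_center (P.mem_part v) hctr

lemma util_part_bigleaf (hTF : TriFree G) (hP : IsStarP G P) {v : V}
    (h3 : 3 ≤ (P.part v).card) (hnc : ¬ IsCtr G P v) :
    util G v (P.part v) = 1 / ((P.part v).card : ℚ) := by
  obtain ⟨c, hcB, hc⟩ : ∃ c ∈ P.part v, ∀ j ∈ P.part v, j ≠ c → G.Adj c j := by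
    rcases hP v with h1 | ⟨_, c, hc1, hc2⟩
    · omega
    · exact ⟨c, hc1, hc2⟩
  have hcv : c ≠ v := by rintro rfl; exact hnc hc
  exact util_leaf hTF hcB hc (P.mem_part v) hcv.symm

lemma F1 {G : SimpleGraph V} (hTF : TriFree G) (hC4 : C4Free G) {S : Finset V} {v w : V}
    (hv : v ∈ S) (hw : w ∈ S) (hvw : v ≠ w)
    (hdv : S.card < 2 * (S.filter fun j => G.Adj v j).card)
    (hdw : S.card < 2 * (S.filter fun j => G.Adj w j).card) : False := by
  set Nv := S.filter fun j => G.Adj v j with hNv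
  set Nw := S.filter fun j => G.Adj w j with hNw
  have hs2 : 2 ≤ S.card := Finset.one_lt_card.mpr ⟨v, hv, w, hw, hvw⟩
  have hEcard : ((S.erase v).erase w).card = S.card - 1 - 1 := by
    rw [card_erase_of_mem (mem_erase.mpr ⟨hvw.symm, hw⟩), card_erase_of_mem hv]
  by_cases hadj : G.Adj v w
  · have hsub : (Nv.erase w) ∪ (Nw.erase v) ⊆ (S.erase v).erase w := by
      intro j hj
      rcases mem_union.mp hj with h | h
      · obtain ⟨hjS, hja⟩ := mem_filter.mp (mem_of_mem_erase h)
        exact mem_erase.mpr ⟨ne_of_mem_erase h, mem_erase.mpr ⟨hja.ne', hjS⟩⟩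
      · obtain ⟨hjS, hja⟩ := mem_filter.mp (mem_of_mem_erase h)
        exact mem_erase.mpr ⟨hja.ne', mem_erase.mpr ⟨ne_of_mem_erase h, hjS⟩⟩
    have h1 : Nv.card - 1 ≤ (Nv.erase w).card := Finset.pred_card_le_card_erase
    have h2 : Nw.card - 1 ≤ (Nw.erase v).card := Finset.pred_card_le_card_erase
    have hunion := Finset.card_union_add_card_inter (Nv.erase w) (Nw.erase v)
    have hle : (Nv.erase w ∪ Nw.erase v).card ≤ S.card - 1 - 1 :=
      hEcard ▸ card_le_card hsub
    have he1 : (Nv.erase w).card ≤ Nv.card := card_erase_le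
    have he2 : (Nw.erase v).card ≤ Nw.card := card_erase_le
    have hint : 0 < ((Nv.erase w) ∩ (Nw.erase v)).card := by omega
    obtain ⟨a, ha⟩ := card_pos.mp hint
    obtain ⟨ha1, ha2⟩ := mem_inter.mp ha
    have hav : G.Adj v a := (mem_filter.mp (mem_of_mem_erase ha1)).2
    have haw : G.Adj w a := (mem_filter.mp (mem_of_mem_erase ha2)).2
    exact hTF hadj haw hav
  · have hsub : Nv ∪ Nw ⊆ (S.erase v).erase w := by
      intro j hj
      rcases mem_union.mp hj with h | h
      · obtain ⟨hjS, hja⟩ := mem_filter.mp h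
        have hjw : j ≠ w := by rintro rfl; exact hadj hja
        exact mem_erase.mpr ⟨hjw, mem_erase.mpr ⟨hja.ne', hjS⟩⟩
      · obtain ⟨hjS, hja⟩ := mem_filter.mp h
        have hjv : j ≠ v := by rintro rfl; exact hadj hja.symm
        exact mem_erase.mpr ⟨hja.ne', mem_erase.mpr ⟨hjv, hjS⟩⟩
    have hunion := Finset.card_union_add_card_inter Nv Nw
    have hle : (Nv ∪ Nw).card ≤ S.card - 1 - 1 := hEcard ▸ card_le_card hsub
    have hint : 1 < (Nv ∩ Nw).card := by omega
    obtain ⟨a, haa, b, hbb, hab⟩ := Finset.one_lt_card.mp hint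
    obtain ⟨ha1, ha2⟩ := mem_inter.mp haa
    obtain ⟨hb1, hb2⟩ := mem_inter.mp hbb
    have hva : G.Adj v a := (mem_filter.mp ha1).2
    have hwa : G.Adj w a := (mem_filter.mp ha2).2
    have hvb : G.Adj v b := (mem_filter.mp hb1).2
    have hwb : G.Adj w b := (mem_filter.mp hb2).2
    exact hC4 hva hwa.symm hwb hvb.symm hvw hab

lemma no_adj_rem (hTF : TriFree G) (hP : IsStarP G P)
    (hopt : ∀ Q : FHGPartition V, IsStarP G Q → SW G Q ≤ SW G P)
    {x y : V} (hadj : G.Adj x y) (hx : Removable G P x) (hy : Removable G P y) : False := by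
  by_cases hyx : y ∈ P.part x
  · have hxy : x ≠ y := hadj.ne
    rcases hx with hsing | ⟨h3, hnc⟩
    · rw [hsing, mem_singleton] at hyx
      exact hxy hyx.symm
    rcases hy with hsing | ⟨h3y, hncy⟩
    · have hxpy : x ∈ P.part y := by
        rw [P.part_eq x y hyx]; exact P.mem_part x
      rw [hsing, mem_singleton] at hxpy
      exact hxy hxpy
    obtain ⟨c, hcB, hc⟩ : ∃ c ∈ P.part x, ∀ j ∈ P.part x, j ≠ c → G.Adj c j := by
      rcases hP x with h1 | ⟨_, c, hc1, hc2⟩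
      · omega
      · exact ⟨c, hc1, hc2⟩
    have hcx : c ≠ x := by rintro rfl; exact hnc hc
    have hcy : c ≠ y := by
      intro hcy
      apply hncy
      intro j hj hne
      rw [P.part_eq x y hyx] at hj
      rw [← hcy] at hne ⊢
      exact hc j hj hne
    exact hTF (hc x (P.mem_part x) hcx.symm) hadj (hc y hyx hcy.symm)
  · exact lemB hTF hP hopt hadj hyx hx hy

lemma opt_inCore (hTF : TriFree G) (hC4 : C4Free G) (hP : IsStarP G P)
    (hopt : ∀ Q : FHGPartition V, IsStarP G Q → SW G Q ≤ SW G P) : InCore G P := by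
  intro S hS
  obtain ⟨hne, hblk⟩ := hS
  have hsQ : (0:ℚ) < (S.card : ℚ) := by exact_mod_cast card_pos.mpr hne
  -- everyone has a neighbour in S
  have hnbr : ∀ i ∈ S, ∃ j ∈ S, G.Adj i j := by
    intro i hi
    by_contra hno
    push_neg at hno
    have hfil : S.filter (fun j => G.Adj i j) = ∅ := Finset.filter_eq_empty_iff.mpr hno
    have h := hblk i hi
    simp only [util] at h
    rw [hfil] at h
    simp only [card_empty, Nat.cast_zero, zero_div] at h
    exact absurd h (not_lt.mpr (util_nonneg G i (P.part i)))
  -- specials have many neighbours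
  have hspec_d : ∀ v ∈ S, IsCtr G P v → 2 ≤ (P.part v).card →
      S.card < 2 * (S.filter fun j => G.Adj v j).card := by
    intro v hv hctr h2
    have h := hblk v hv
    rw [util_part_spec hctr, util] at h
    have hm : (2:ℚ) ≤ ((P.part v).card : ℚ) := by exact_mod_cast h2
    have hmpos : (0:ℚ) < ((P.part v).card : ℚ) := by linarith
    have hhalf : (1:ℚ)/2 ≤ (((P.part v).card : ℚ) - 1) / ((P.part v).card : ℚ) := by
      rw [div_le_div_iff₀ (by norm_num) hmpos]
      linarith
    have h2' : (1:ℚ)/2 < ((S.filter fun j => G.Adj v j).card : ℚ) / (S.card : ℚ) :=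
      lt_of_le_of_lt hhalf h
    rw [div_lt_div_iff₀ (by norm_num) hsQ] at h2'
    have : (S.card : ℚ) < 2 * ((S.filter fun j => G.Adj v j).card : ℚ) := by linarith
    exact_mod_cast this
  -- there is a special vertex
  obtain ⟨i₀, hi₀⟩ := hne
  obtain ⟨j₀, hj₀S, hj₀⟩ := hnbr i₀ hi₀
  have hv₀ : ∃ v₀ ∈ S, 2 ≤ (P.part v₀).card ∧ IsCtr G P v₀ := by
    rcases role_cases hP i₀ with hri | hsi
    · rcases role_cases hP j₀ with hrj | hsj
      · exact absurd (no_adj_rem hTF hP hopt hj₀ hri hrj) not_false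
      · exact ⟨j₀, hj₀S, hsj⟩
    · exact ⟨i₀, hi₀, hsi⟩
  obtain ⟨v₀, hv₀S, hk2, hv₀ctr⟩ := hv₀
  -- uniqueness: all others are removable
  have hrem : ∀ x ∈ S, x ≠ v₀ → Removable G P x := by
    intro x hx hxv
    rcases role_cases hP x with h | ⟨h2, hctr⟩
    · exact h
    · exact absurd (F1 hTF hC4 hx hv₀S hxv (hspec_d x hx hctr h2) (hspec_d v₀ hv₀S hv₀ctr hk2))
        not_false
  -- every non-v₀ member is adjacent exactly to v₀ within S
  have hadjv : ∀ x ∈ S, x ≠ v₀ → G.Adj x v₀ := by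
    intro x hx hxv
    obtain ⟨y, hyS, hy⟩ := hnbr x hx
    have hyv : y = v₀ := by
      by_contra hyv
      exact no_adj_rem hTF hP hopt hy (hrem x hx hxv) (hrem y hyS hyv)
    exact hyv ▸ hy
  have hfilx : ∀ x ∈ S, x ≠ v₀ → (S.filter fun j => G.Adj x j) = {v₀} := by
    intro x hx hxv
    ext j
    simp only [mem_filter, mem_singleton]
    constructor
    · rintro ⟨hjS, hj⟩
      by_contra hjv
      exact no_adj_rem hTF hP hopt hj (hrem x hx hxv) (hrem j hjS hjv)
    · rintro rfl
      exact ⟨hv₀S, hadjv x hx hxv⟩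
  have hfil0 : (S.filter fun j => G.Adj v₀ j) = S.erase v₀ := by
    ext j
    simp only [mem_filter, mem_erase]
    constructor
    · rintro ⟨hjS, hj⟩
      exact ⟨hj.ne', hjS⟩
    · rintro ⟨hjv, hjS⟩
      exact ⟨hjS, (hadjv j hjS hjv).symm⟩
  -- blocking inequality for v₀ gives k < s
  have hs1 : 1 ≤ S.card := card_pos.mpr ⟨v₀, hv₀S⟩
  have hkq : (((P.part v₀).card : ℚ) - 1) / ((P.part v₀).card : ℚ)
      < ((S.card : ℚ) - 1) / (S.card : ℚ) := by
    have h := hblk v₀ hv₀S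
    rw [util_part_spec hv₀ctr, util, hfil0, card_erase_of_mem hv₀S,
      Nat.cast_sub hs1, Nat.cast_one] at h
    exact h
  have hks : (P.part v₀).card < S.card := by
    have hkQ : (2:ℚ) ≤ ((P.part v₀).card : ℚ) := by exact_mod_cast hk2
    have hkpos : (0:ℚ) < ((P.part v₀).card : ℚ) := by linarith
    rw [div_lt_div_iff₀ hkpos hsQ] at hkq
    have : ((P.part v₀).card : ℚ) < (S.card : ℚ) := by nlinarith
    exact_mod_cast this
  -- take a neighbour x of v₀
  obtain ⟨x, hxS, hx⟩ := hnbr v₀ hv₀S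
  have hxv : x ≠ v₀ := fun h => G.irrefl (h ▸ hx)
  rcases hrem x hxS hxv with hsing | ⟨h3, hnc⟩
  · -- singleton: lemA_sing
    have hxpc : x ∉ P.part v₀ := by
      intro h
      have := P.part_eq v₀ x h
      have hvx : v₀ ∈ P.part x := by rw [this]; exact P.mem_part v₀
      rw [hsing, mem_singleton] at hvx
      exact hxv hvx.symm
    exact lemA_sing hTF hP hopt hx hv₀ctr hxpc hsing
  · -- big leaf
    have hsx : S.card < (P.part x).card := by
      have h := hblk x hxS
      rw [util_part_bigleaf hTF hP h3 hnc, util, hfilx x hxS hxv, card_singleton,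
        Nat.cast_one] at h
      have hbpos : (0:ℚ) < ((P.part x).card : ℚ) := by
        have : (3:ℚ) ≤ ((P.part x).card : ℚ) := by exact_mod_cast h3
        linarith
      rw [div_lt_div_iff₀ hbpos hsQ] at h
      have : (S.card : ℚ) < ((P.part x).card : ℚ) := by linarith
      exact_mod_cast this
    by_cases hmem : x ∈ P.part v₀
    · have : P.part x = P.part v₀ := P.part_eq v₀ x hmem
      rw [this] at hsx
      omega
    · have hineq := lemA_big hTF hP hopt hx hv₀ctr hmem h3 hnc
      have hb : (S.card : ℚ) + 1 ≤ ((P.part x).card : ℚ) := by exact_mod_cast hsx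
      have hk : ((P.part v₀).card : ℚ) + 1 ≤ (S.card : ℚ) := by exact_mod_cast hks
      have hkQ : (2:ℚ) ≤ ((P.part v₀).card : ℚ) := by exact_mod_cast hk2
      nlinarith [hineq, hb, hk, hkQ, hsQ]

end Main

lemma partition_part_injective :
    Function.Injective (fun P : FHGPartition V => P.part) := by
  rintro ⟨p1, h1, h1'⟩ ⟨p2, h2, h2'⟩ h
  simpa using h

noncomputable instance : Fintype (FHGPartition V) :=
  Fintype.ofInjective _ partition_part_injective

def singPartition (V : Type*) [Fintype V] [DecidableEq V] : FHGPartition V where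
  part i := {i}
  mem_part i := mem_singleton_self i
  part_eq i j hj := by
    rw [mem_singleton] at hj
    rw [hj]

lemma exists_opt (G : SimpleGraph V) :
    ∃ P : FHGPartition V, IsStarP G P ∧ ∀ Q : FHGPartition V, IsStarP G Q → SW G Q ≤ SW G P := by
  have hne : (univ.filter fun P : FHGPartition V => IsStarP G P).Nonempty := by
    refine ⟨singPartition V, mem_filter.mpr ⟨mem_univ _, ?_⟩⟩
    intro i
    left
    simp [singPartition]
  obtain ⟨P, hmem, hmax⟩ := Finset.exists_max_image _ (SW G) hne
  exact ⟨P, (mem_filter.mp hmem).2, fun Q hQ => hmax Q (mem_filter.mpr ⟨mem_univ _, hQ⟩)⟩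


/-- For every simple symmetric fractional hedonic game represented by a finite
simple graph with girth at least five (no 3-cycle and no 4-cycle), the core is
non-empty; moreover there is a core partition each of whose blocks is a singleton
or a star (a block of size at least 2 with a center adjacent to all other members). -/
theorem stmt_11 (G : SimpleGraph V)
    (hgirth : ∀ (v : V) (c : G.Walk v v), c.IsCycle → c.length ≠ 3 ∧ c.length ≠ 4) :
    ∃ π : FHGPartition V, InCore G π ∧
      ∀ i : V, (π.part i).card = 1 ∨
        (2 ≤ (π.part i).card ∧
          ∃ c ∈ π.part i, ∀ j ∈ π.part i, j ≠ c → G.Adj c j) := by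
  obtain ⟨P, hP, hopt⟩ := exists_opt G
  exact ⟨P, opt_inCore (triFree_of_girth hgirth) (c4Free_of_girth hgirth) hP hopt, hP⟩
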